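/- Generalized Cheeger upper bound: the mean of the n smallest eigenvalues of the symmetric Laplacian Δ is at most the n-th isoperimetric constant: (1/n)∑_{k=1}^n λ_k ≤ ι_n, where λ_1 ≤ … ≤ λ_n are the smallest eigenvalues of Δ = id − (K+K*)/2 (self-adjoint on the π-weighted inner product space) and ι_n = min over n disjoint nonempty subsets {Q_i} of (1/n)∑_i ∂(Q_i)/π(Q_i). -/

import Mathlib

open Finset

/-- Outgoing boundary flow `∂(Q) = ∑_{u∈Q, v∉Q} K(u,v)π(u)`. -/
noncomputable def dpart {V : Type*} [Fintype V] [DecidableEq V]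
    (K : V → V → ℝ) (π : V → ℝ) (Q : Finset V) : ℝ :=
  ∑ u ∈ Q, ∑ v ∈ Qᶜ, K u v * π u

/-- `π(Q) = ∑_{u∈Q} π(u)`. -/
noncomputable def pim {V : Type*} (π : V → ℝ) (Q : Finset V) : ℝ :=
  ∑ u ∈ Q, π u

/-- The `n`-th isoperimetric constant: minimum of the mean normalized boundary over
families of `n` pairwise disjoint nonempty subsets of `V`. -/
noncomputable def iotaD {V : Type*} [Fintype V] [DecidableEq V]
    (K : V → V → ℝ) (π : V → ℝ) (n : ℕ) : ℝ :=
  sInf {x : ℝ | ∃ Q : Fin n → Finset V, (∀ i, (Q i).Nonempty) ∧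
    Pairwise (Function.onFun Disjoint Q) ∧
    x = (∑ i, dpart K π (Q i) / pim π (Q i)) / n}

/-- The `n`-th partition isoperimetric constant: minimum of the mean normalized boundary
over partitions of `V` into `n` nonempty parts. -/
noncomputable def iotaP {V : Type*} [Fintype V] [DecidableEq V]
    (K : V → V → ℝ) (π : V → ℝ) (n : ℕ) : ℝ :=
  sInf {x : ℝ | ∃ Q : Fin n → Finset V, (∀ i, (Q i).Nonempty) ∧
    Pairwise (Function.onFun Disjoint Q) ∧
    Finset.univ.biUnion Q = Finset.univ ∧
    x = (∑ i, dpart K π (Q i) / pim π (Q i)) / n}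

/-- The symmetric Laplacian `Δ = id − (K + K*)/2` acting on `π`-weighted functions. -/
noncomputable def DeltaOp {V : Type*} [Fintype V]
    (K : V → V → ℝ) (π : V → ℝ) (f : V → ℝ) : V → ℝ :=
  fun u => f u - (∑ v, (K u v + K v u * π v / π u) * f v) / 2

noncomputable def ip {V : Type*} [Fintype V] (π : V → ℝ) (f g : V → ℝ) : ℝ :=
  ∑ u, f u * g u * π u

lemma ip_comm {V : Type*} [Fintype V] (π : V → ℝ) (f g : V → ℝ) :
    ip π f g = ip π g f := by
  unfold ip; exact Finset.sum_congr rfl (fun u _ => by ring)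

lemma ip_delta {V : Type*} [Fintype V] (K : V → V → ℝ) (π : V → ℝ)
    (hπ : ∀ u, 0 < π u) (f g : V → ℝ) :
    ip π (DeltaOp K π f) g
      = ip π f g - (∑ u, ∑ v, (K u v * π u + K v u * π v) * f v * g u) / 2 := by
  unfold ip DeltaOp
  have : ∀ u : V, (f u - (∑ v, (K u v + K v u * π v / π u) * f v) / 2) * g u * π u
      = f u * g u * π u - (∑ v, (K u v * π u + K v u * π v) * f v * g u) / 2 := by
    intro u
    have hu := (hπ u).ne'
    rw [sub_mul, sub_mul, div_mul_eq_mul_div, div_mul_eq_mul_div, Finset.sum_mul,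
      Finset.sum_mul]
    congr 2
    refine Finset.sum_congr rfl (fun v _ => ?_)
    field_simp
  rw [Finset.sum_congr rfl (fun u _ => this u), Finset.sum_sub_distrib, Finset.sum_div]

lemma ip_delta_symm {V : Type*} [Fintype V] (K : V → V → ℝ) (π : V → ℝ)
    (hπ : ∀ u, 0 < π u) (f g : V → ℝ) :
    ip π (DeltaOp K π f) g = ip π (DeltaOp K π g) f := by
  rw [ip_delta K π hπ, ip_delta K π hπ, ip_comm]
  congr 2
  rw [Finset.sum_comm]
  refine Finset.sum_congr rfl fun u _ => Finset.sum_congr rfl fun v _ => by ring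

lemma weighted_cs {V : Type*} [Fintype V] (π : V → ℝ) (hπ : ∀ u, 0 < π u) (f g : V → ℝ) :
    (ip π f g)^2 ≤ ip π f f * ip π g g := by
  have h := Finset.sum_mul_sq_le_sq_mul_sq Finset.univ
    (fun u => f u * Real.sqrt (π u)) (fun u => g u * Real.sqrt (π u))
  have e : ∀ (h h' : V → ℝ),
      (∑ u, (h u * Real.sqrt (π u)) * (h' u * Real.sqrt (π u))) = ip π h h' := by
    intro h h'
    refine Finset.sum_congr rfl (fun u _ => ?_)
    rw [mul_mul_mul_comm, Real.mul_self_sqrt (hπ u).le]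
  simp only [pow_two] at h
  rw [e f g, e f f, e g g] at h
  rwa [pow_two]


open Matrix in
lemma dual_orth {V : Type*} [Fintype V] [DecidableEq V] (π : V → ℝ) (hπ : ∀ u, 0 < π u)
    (F : Fin (Fintype.card V) → V → ℝ)
    (horth : ∀ j k, ∑ u, F j u * F k u * π u = if j = k then 1 else 0) :
    ∀ u v, (∑ k, F k u * F k v) * (Real.sqrt (π u) * Real.sqrt (π v))
      = if u = v then 1 else 0 := by
  classical
  let e : V ≃ Fin (Fintype.card V) := Fintype.equivFin V
  let M : Matrix (Fin (Fintype.card V)) (Fin (Fintype.card V)) ℝ :=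
    Matrix.of fun k i => F k (e.symm i) * Real.sqrt (π (e.symm i))
  have hMMT : M * Mᵀ = 1 := by
    ext j k
    rw [Matrix.mul_apply, Matrix.one_apply]
    have h0 : ∀ i, M j i * Mᵀ i k
        = F j (e.symm i) * F k (e.symm i) * π (e.symm i) := by
      intro i
      simp only [M, Matrix.transpose_apply, Matrix.of_apply]
      rw [mul_mul_mul_comm, Real.mul_self_sqrt (hπ _).le]
    have h2 : ∑ i, M j i * Mᵀ i k = ∑ u, F j u * F k u * π u := by
      rw [← Equiv.sum_comp e.symm (fun u => F j u * F k u * π u)]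
      exact Finset.sum_congr rfl fun i _ => h0 i
    rw [h2, horth]
  have hTM : Mᵀ * M = 1 := mul_eq_one_comm.mp hMMT
  intro u v
  have h1 := congrFun (congrFun hTM (e u)) (e v)
  rw [Matrix.mul_apply] at h1
  simp only [M, Matrix.transpose_apply, Matrix.of_apply, Equiv.symm_apply_apply,
    Matrix.one_apply, Equiv.apply_eq_iff_eq] at h1
  rw [← h1, Finset.sum_mul]
  exact Finset.sum_congr rfl (fun k _ => by ring)

lemma parseval {V : Type*} [Fintype V] [DecidableEq V] (π : V → ℝ) (hπ : ∀ u, 0 < π u)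
    (F : Fin (Fintype.card V) → V → ℝ)
    (horth : ∀ j k, ∑ u, F j u * F k u * π u = if j = k then 1 else 0)
    (f g : V → ℝ) :
    ∑ k, ip π f (F k) * ip π g (F k) = ip π f g := by
  classical
  have key := dual_orth π hπ F horth
  have hdiag : ∀ u, (∑ k, F k u * F k u) * π u = 1 := by
    intro u
    have := key u u
    rwa [Real.mul_self_sqrt (hπ u).le, if_pos rfl] at this
  have hoff : ∀ u v, u ≠ v → (∑ k, F k u * F k v) = 0 := by
    intro u v huv
    have := key u v
    rw [if_neg huv] at this
    have hpos : 0 < Real.sqrt (π u) * Real.sqrt (π v) :=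
      mul_pos (Real.sqrt_pos.mpr (hπ u)) (Real.sqrt_pos.mpr (hπ v))
    exact (mul_eq_zero.mp this).resolve_right hpos.ne'
  unfold ip
  have expand : ∀ k : Fin (Fintype.card V),
      (∑ u, f u * F k u * π u) * (∑ v, g v * F k v * π v)
      = ∑ u, ∑ v, f u * g v * π u * π v * (F k u * F k v) := by
    intro k
    rw [Finset.sum_mul_sum]
    exact Finset.sum_congr rfl fun u _ => Finset.sum_congr rfl fun v _ => by ring
  rw [Finset.sum_congr rfl (fun k _ => expand k)]
  rw [Finset.sum_comm]
  refine Finset.sum_congr rfl (fun u _ => ?_)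
  rw [Finset.sum_comm]
  rw [Finset.sum_eq_single u]
  · rw [← Finset.mul_sum]
    have : f u * g u * π u * π u * (∑ k, F k u * F k u)
        = f u * g u * π u * ((∑ k, F k u * F k u) * π u) := by ring
    rw [this, hdiag u]
    ring
  · intro v _ hvu
    rw [← Finset.mul_sum, hoff u v (Ne.symm hvu), mul_zero]
  · intro h; exact absurd (Finset.mem_univ u) h

lemma kyfan {V : Type*} [Fintype V] [DecidableEq V]
    (K : V → V → ℝ) (π : V → ℝ) (hπ : ∀ u, 0 < π u)
    (lam : Fin (Fintype.card V) → ℝ) (hmono : Monotone lam)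
    (F : Fin (Fintype.card V) → V → ℝ)
    (heig : ∀ k, DeltaOp K π (F k) = fun u => lam k * F k u)
    (horth : ∀ j k, ∑ u, F j u * F k u * π u = if j = k then 1 else 0)
    (n : ℕ) (hn : 0 < n) (hcard : n ≤ Fintype.card V)
    (h : Fin n → V → ℝ)
    (horthH : ∀ i j, ip π (h i) (h j) = if i = j then 1 else 0) :
    ∑ i : Fin n, lam (Fin.castLE hcard i) ≤ ∑ i, ip π (DeltaOp K π (h i)) (h i) := by
  classical
  have hFip : ∀ j k, ip π (F j) (F k) = if j = k then 1 else 0 := horth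
  set c : Fin n → Fin (Fintype.card V) → ℝ := fun i k => ip π (h i) (F k) with hc
  have hquad : ∀ i, ip π (DeltaOp K π (h i)) (h i) = ∑ k, lam k * (c i k)^2 := by
    intro i
    rw [← parseval π hπ F horth (DeltaOp K π (h i)) (h i)]
    refine Finset.sum_congr rfl (fun k _ => ?_)
    have h1 : ip π (DeltaOp K π (h i)) (F k) = lam k * c i k := by
      rw [ip_delta_symm K π hπ, heig k]
      simp only [hc, ip]
      rw [Finset.mul_sum]
      exact Finset.sum_congr rfl (fun u _ => by ring)
    rw [h1]
    have : c i k = ip π (h i) (F k) := by rw [hc]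
    rw [← this]; ring
  set d : Fin (Fintype.card V) → ℝ := fun k => ∑ i, (c i k)^2 with hd
  have hdk : ∀ k, d k = ∑ i, (c i k)^2 := fun k => by rw [hd]
  have hd0 : ∀ k, 0 ≤ d k := fun k => by
    rw [hdk]; exact Finset.sum_nonneg (fun i _ => sq_nonneg _)
  have hrow : ∀ i, ∑ k, (c i k)^2 = 1 := by
    intro i
    have hp := parseval π hπ F horth (h i) (h i)
    rw [horthH i i, if_pos rfl] at hp
    rw [← hp]
    refine Finset.sum_congr rfl fun k _ => ?_
    simp only [hc, sq]
  have hdsum : ∑ k, d k = n := by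
    rw [Finset.sum_congr rfl (fun k (_ : k ∈ univ) => hdk k), Finset.sum_comm]
    simp [hrow]
  have hd1 : ∀ k, d k ≤ 1 := by
    intro k
    set g : V → ℝ := fun u => ∑ i, c i k * h i u with hg
    have hgF : ip π g (F k) = d k := by
      simp only [ip, hg]
      rw [show (∑ u, (∑ i, c i k * h i u) * F k u * π u)
          = ∑ u, ∑ i, c i k * (h i u * F k u * π u) by
        refine Finset.sum_congr rfl fun u _ => ?_
        rw [Finset.sum_mul, Finset.sum_mul]
        exact Finset.sum_congr rfl fun i _ => by ring]
      rw [Finset.sum_comm, hdk]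
      refine Finset.sum_congr rfl fun i _ => ?_
      rw [← Finset.mul_sum]
      have : (∑ u, h i u * F k u * π u) = c i k := by simp only [hc, ip]
      rw [this, sq]
    have hgg : ip π g g = d k := by
      simp only [ip, hg]
      rw [show (∑ u, (∑ i, c i k * h i u) * (∑ i, c i k * h i u) * π u)
          = ∑ u, ∑ i, ∑ j, c i k * c j k * (h i u * h j u * π u) by
        refine Finset.sum_congr rfl fun u _ => ?_
        rw [Finset.sum_mul_sum, Finset.sum_mul]
        refine Finset.sum_congr rfl fun i _ => ?_
        rw [Finset.sum_mul]
        exact Finset.sum_congr rfl fun j _ => by ring]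
      rw [Finset.sum_comm, hdk]
      refine Finset.sum_congr rfl fun i _ => ?_
      rw [Finset.sum_comm, Finset.sum_eq_single i]
      · rw [← Finset.mul_sum]
        have h11 : (∑ u, h i u * h i u * π u) = 1 := by
          have := horthH i i; rwa [if_pos rfl] at this
        rw [h11, mul_one, sq]
      · intro j _ hji
        rw [← Finset.mul_sum]
        have h10 : (∑ u, h i u * h j u * π u) = 0 := by
          have := horthH i j; rwa [if_neg (Ne.symm hji)] at this
        rw [h10, mul_zero]
      · intro hi; exact absurd (Finset.mem_univ i) hi
    have hcs := weighted_cs π hπ g (F k)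
    rw [hgF, hgg, hFip k k, if_pos rfl, mul_one] at hcs
    nlinarith [hd0 k]
  -- arithmetic step
  have hnn : n - 1 < Fintype.card V := by omega
  set μ := lam ⟨n - 1, hnn⟩ with hμ
  set e : Fin (Fintype.card V) → ℝ := fun k => if (k : ℕ) < n then 1 else 0 with he
  have hek : ∀ k, e k = if (k : ℕ) < n then 1 else 0 := fun k => by rw [he]
  have himg : (univ : Finset (Fin n)).map (Fin.castLEEmb hcard)
      = univ.filter (fun k : Fin (Fintype.card V) => (k : ℕ) < n) := by
    ext k
    simp only [Finset.mem_map, Finset.mem_univ, true_and, Finset.mem_filter,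
      Fin.castLEEmb, Function.Embedding.coeFn_mk]
    constructor
    · rintro ⟨i, rfl⟩; exact i.isLt
    · intro hk; exact ⟨⟨(k : ℕ), hk⟩, by ext; simp [Fin.castLE]⟩
  have hesum : ∑ k, e k = n := by
    rw [Finset.sum_congr rfl (fun k (_ : k ∈ univ) => hek k), Finset.sum_ite,
      Finset.sum_const, Finset.sum_const_zero, add_zero, ← himg]
    simp
  have hterm : ∀ k, 0 ≤ (lam k - μ) * (d k - e k) := by
    intro k
    by_cases hk : (k : ℕ) < n
    · have h1 : lam k ≤ μ := hmono (by simp [Fin.le_def]; omega)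
      have h2 : d k - e k ≤ 0 := by rw [hek]; simp [hk]; linarith [hd1 k]
      nlinarith
    · have h1 : μ ≤ lam k := hmono (by simp [Fin.le_def]; omega)
      have h2 : 0 ≤ d k - e k := by rw [hek]; simp [hk]; exact hd0 k
      nlinarith
  have hkey : ∑ k, lam k * e k ≤ ∑ k, lam k * d k := by
    have h0 : 0 ≤ ∑ k, (lam k - μ) * (d k - e k) :=
      Finset.sum_nonneg fun k _ => hterm k
    have hexp : ∑ k, (lam k - μ) * (d k - e k)
        = ((∑ k, lam k * d k) - ∑ k, lam k * e k)
          - ((∑ k, μ * d k) - ∑ k, μ * e k) := by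
      rw [← Finset.sum_sub_distrib, ← Finset.sum_sub_distrib, ← Finset.sum_sub_distrib]
      exact Finset.sum_congr rfl fun k _ => by ring
    have hmd : ∑ k, μ * d k = μ * n := by rw [← Finset.mul_sum, hdsum]
    have hme : ∑ k, μ * e k = μ * n := by rw [← Finset.mul_sum, hesum]
    rw [hexp, hmd, hme, sub_self, sub_zero] at h0
    linarith
  have hleft : ∑ i : Fin n, lam (Fin.castLE hcard i) = ∑ k, lam k * e k := by
    rw [Finset.sum_congr rfl (fun k (_ : k ∈ univ) =>
      show lam k * e k = if (k : ℕ) < n then lam k else 0 by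
        rw [hek]; split <;> simp)]
    rw [Finset.sum_ite, Finset.sum_const_zero, add_zero, ← himg, Finset.sum_map]
    rfl
  have hright : ∑ i, ip π (DeltaOp K π (h i)) (h i) = ∑ k, lam k * d k := by
    rw [Finset.sum_congr rfl fun i _ => hquad i, Finset.sum_comm]
    refine Finset.sum_congr rfl fun k _ => ?_
    rw [hdk, Finset.mul_sum]
  rw [hleft, hright]
  exact hkey

noncomputable def indFn {V : Type*} [Fintype V] [DecidableEq V]
    (π : V → ℝ) (Q : Finset V) : V → ℝ :=
  fun u => if u ∈ Q then (Real.sqrt (pim π Q))⁻¹ else 0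

lemma pim_pos {V : Type*} [Fintype V] (π : V → ℝ) (hπ : ∀ u, 0 < π u)
    {Q : Finset V} (hQ : Q.Nonempty) : 0 < pim π Q :=
  Finset.sum_pos (fun u _ => hπ u) hQ

lemma ip_ind_self {V : Type*} [Fintype V] [DecidableEq V] (π : V → ℝ)
    (hπ : ∀ u, 0 < π u) {Q : Finset V} (hQ : Q.Nonempty) :
    ip π (indFn π Q) (indFn π Q) = 1 := by
  have hp := pim_pos π hπ hQ
  unfold ip indFn
  rw [show (∑ u, (if u ∈ Q then (Real.sqrt (pim π Q))⁻¹ else 0)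
        * (if u ∈ Q then (Real.sqrt (pim π Q))⁻¹ else 0) * π u)
      = ∑ u, if u ∈ Q then (pim π Q)⁻¹ * π u else 0 by
    refine Finset.sum_congr rfl fun u _ => ?_
    split
    · rw [← mul_inv, Real.mul_self_sqrt hp.le]
    · ring]
  rw [Finset.sum_ite_mem, Finset.univ_inter, ← Finset.mul_sum]
  exact inv_mul_cancel₀ hp.ne'

lemma ip_ind_disj {V : Type*} [Fintype V] [DecidableEq V] (π : V → ℝ)
    {Q Q' : Finset V} (hdisj : Disjoint Q Q') :
    ip π (indFn π Q) (indFn π Q') = 0 := by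
  unfold ip indFn
  refine Finset.sum_eq_zero fun u _ => ?_
  by_cases h1 : u ∈ Q
  · have h2 : u ∉ Q' := fun h2 => (Finset.disjoint_left.mp hdisj) h1 h2
    simp [h1, h2]
  · simp [h1]

lemma ip_delta_ind {V : Type*} [Fintype V] [DecidableEq V]
    (K : V → V → ℝ) (π : V → ℝ) (hK1 : ∀ u, ∑ v, K u v = 1)
    (hπ : ∀ u, 0 < π u) {Q : Finset V} (hQ : Q.Nonempty) :
    ip π (DeltaOp K π (indFn π Q)) (indFn π Q) = dpart K π Q / pim π Q := by
  have hp := pim_pos π hπ hQ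
  rw [ip_delta K π hπ, ip_ind_self π hπ hQ]
  have hBB : ∀ u v : V, (K u v * π u + K v u * π v) * indFn π Q v * indFn π Q u
      = if u ∈ Q then (if v ∈ Q then (K u v * π u + K v u * π v) * (pim π Q)⁻¹ else 0)
        else 0 := by
    intro u v
    unfold indFn
    by_cases h1 : u ∈ Q <;> by_cases h2 : v ∈ Q
    · rw [if_pos h1, if_pos h2, if_pos h1, if_pos h2, mul_assoc, ← mul_inv,
        Real.mul_self_sqrt hp.le]
    all_goals simp [h1, h2]
  have inner : ∀ u : V, (∑ v, (if u ∈ Q then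
        (if v ∈ Q then (K u v * π u + K v u * π v) * (pim π Q)⁻¹ else 0) else 0))
      = if u ∈ Q then (∑ v ∈ Q, (K u v * π u + K v u * π v)) * (pim π Q)⁻¹ else 0 := by
    intro u
    by_cases h1 : u ∈ Q
    · simp only [if_pos h1]
      rw [Finset.sum_ite_mem, Finset.univ_inter, Finset.sum_mul]
    · simp only [if_neg h1, Finset.sum_const_zero]
  have hsum1 : (∑ u, ∑ v, (K u v * π u + K v u * π v) * indFn π Q v * indFn π Q u)
      = (∑ u ∈ Q, ∑ v ∈ Q, (K u v * π u + K v u * π v)) * (pim π Q)⁻¹ := by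
    rw [Finset.sum_congr rfl fun u (_ : u ∈ univ) => by
      rw [Finset.sum_congr rfl fun v (_ : v ∈ univ) => hBB u v, inner u]]
    rw [Finset.sum_ite_mem, Finset.univ_inter, Finset.sum_mul]
  have hS : (∑ u ∈ Q, ∑ v ∈ Q, (K u v * π u + K v u * π v))
      = 2 * ∑ u ∈ Q, ∑ v ∈ Q, K u v * π u := by
    rw [Finset.sum_congr rfl fun u (_ : u ∈ Q) => Finset.sum_add_distrib,
      Finset.sum_add_distrib, two_mul]
    congr 1
    rw [Finset.sum_comm]
  have hT : (∑ u ∈ Q, ∑ v ∈ Q, K u v * π u) + dpart K π Q = pim π Q := by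
    unfold dpart pim
    rw [← Finset.sum_add_distrib]
    refine Finset.sum_congr rfl fun u hu => ?_
    rw [Finset.sum_add_sum_compl, ← Finset.sum_mul, hK1 u, one_mul]
  have hd' : dpart K π Q = pim π Q - ∑ u ∈ Q, ∑ v ∈ Q, K u v * π u := by linarith
  rw [hsum1, hS, hd']
  field_simp

theorem mean_eigenvalues_le_iota {V : Type*} [Fintype V] [DecidableEq V]
    (K : V → V → ℝ) (π : V → ℝ)
    (hK0 : ∀ u v, 0 ≤ K u v) (hK1 : ∀ u, ∑ v, K u v = 1)
    (hπ : ∀ u, 0 < π u) (hπ1 : ∑ u, π u = 1)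
    (hstat : ∀ v, ∑ u, π u * K u v = π v)
    (lam : Fin (Fintype.card V) → ℝ) (hmono : Monotone lam)
    (F : Fin (Fintype.card V) → V → ℝ)
    (heig : ∀ k, DeltaOp K π (F k) = fun u => lam k * F k u)
    (horth : ∀ j k, ∑ u, F j u * F k u * π u = if j = k then 1 else 0)
    (n : ℕ) (hn : 0 < n) (hcard : n ≤ Fintype.card V) :
    (∑ i : Fin n, lam (Fin.castLE hcard i)) / n ≤ iotaD K π n := by
  classical
  apply le_csInf
  · obtain ⟨f⟩ : Nonempty (Fin n ↪ V) :=
      Function.Embedding.nonempty_iff_card_le.mpr (by simpa using hcard)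
    refine ⟨_, ⟨fun i => {f i}, fun i => Finset.singleton_nonempty _, ?_, rfl⟩⟩
    intro i j hij
    simp only [Function.onFun, Finset.disjoint_singleton]
    exact f.injective.ne hij
  · rintro x ⟨Q, hne, hdisj, rfl⟩
    have hstep : ∑ i : Fin n, lam (Fin.castLE hcard i)
        ≤ ∑ i, dpart K π (Q i) / pim π (Q i) := by
      have horthH : ∀ i j, ip π (indFn π (Q i)) (indFn π (Q j))
          = if i = j then 1 else 0 := by
        intro i j
        by_cases hij : i = j
        · subst hij; rw [if_pos rfl]; exact ip_ind_self π hπ (hne i)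
        · rw [if_neg hij]; exact ip_ind_disj π (hdisj hij)
      have hk := kyfan K π hπ lam hmono F heig horth n hn hcard
        (fun i => indFn π (Q i)) horthH
      rw [Finset.sum_congr rfl fun i (_ : i ∈ univ) =>
        ip_delta_ind K π hK1 hπ (hne i)] at hk
      exact hk
    have hnpos : (0:ℝ) ≤ (n:ℝ) := by positivity
    exact div_le_div_of_nonneg_right hstep hnpos
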